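/- An r×n ρ-latin rectangle L on symbols [k] can be completed to an n×n ρ-latin square if and only if ρ_ℓ − e_ℓ ≤ n − r for all ℓ and, for all J ⊆ [n] (columns) and K ⊆ [k] (symbols), Σ_{ℓ∈K}(ρ_ℓ − e_ℓ) ≤ |J|(n − r) + μ_K([n] \ J), where μ_K([n] \ J) = Σ_{j∉J} |{ℓ ∈ K : ℓ missing in column j}|. -/

import Mathlib

open Finset

/-- `L` is a (partial) latin array: each symbol occurs at most once in each
row and at most once in each column. -/
def latinArr {r s k : ℕ} (L : Fin r → Fin s → Fin k) : Prop :=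
  (∀ i, Function.Injective (L i)) ∧ (∀ j, Function.Injective (fun i => L i j))

/-- Number of occurrences of symbol `ℓ` in `L`. -/
def symCount {r s k : ℕ} (L : Fin r → Fin s → Fin k) (ℓ : Fin k) : ℕ :=
  ((univ : Finset (Fin r × Fin s)).filter (fun p => L p.1 p.2 = ℓ)).card

/-- `μ_I(ℓ)`: number of rows in `I` in which symbol `ℓ` is missing. -/
def muRows {r s k : ℕ} (L : Fin r → Fin s → Fin k) (I : Finset (Fin r)) (ℓ : Fin k) : ℕ :=
  (I.filter (fun i => ∀ j, L i j ≠ ℓ)).card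

/-- `μ_J(ℓ)`: number of columns in `J` in which symbol `ℓ` is missing. -/
def muCols {r s k : ℕ} (L : Fin r → Fin s → Fin k) (J : Finset (Fin s)) (ℓ : Fin k) : ℕ :=
  (J.filter (fun j => ∀ i, L i j ≠ ℓ)).card

/-- `μ_K(i)` for a row `i`: number of symbols of `K` missing in row `i`. -/
def muSymRow {r s k : ℕ} (L : Fin r → Fin s → Fin k) (K : Finset (Fin k)) (i : Fin r) : ℕ :=
  (K.filter (fun ℓ => ∀ j, L i j ≠ ℓ)).card

/-- `μ_K(j)` for a column `j`: number of symbols of `K` missing in column `j`. -/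
def muSymCol {r s k : ℕ} (L : Fin r → Fin s → Fin k) (K : Finset (Fin k)) (j : Fin s) : ℕ :=
  (K.filter (fun ℓ => ∀ i, L i j ≠ ℓ)).card

/-- `S` is an `n × n` `ρ`-latin square. -/
def rhoLatinSquare {n k : ℕ} (ρ : Fin k → ℕ) (S : Fin n → Fin n → Fin k) : Prop :=
  latinArr S ∧ ∀ ℓ, symCount S ℓ = ρ ℓ

/-- `S` extends `L` on the top-left `r × s` corner. -/
def extends' {r s n k : ℕ} (hr : r ≤ n) (hs : s ≤ n)
    (L : Fin r → Fin s → Fin k) (S : Fin n → Fin n → Fin k) : Prop :=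
  ∀ i j, S (Fin.castLE hr i) (Fin.castLE hs j) = L i j

set_option maxHeartbeats 1000000

lemma fin_filter_lt_card {n r : ℕ} (h : r ≤ n) :
    ((univ : Finset (Fin n)).filter (fun i => i.val < r)).card = r := by
  have hb : (univ : Finset (Fin r)).card
      = ((univ : Finset (Fin n)).filter (fun i => i.val < r)).card := by
    apply Finset.card_bij (fun (i : Fin r) _ => Fin.castLE h i)
    · intro i _; exact mem_filter.mpr ⟨mem_univ _, i.isLt⟩
    · intro i _ i' _ hii
      have := congrArg Fin.val hii
      exact Fin.ext this
    · intro j hj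
      exact ⟨⟨j.val, (mem_filter.mp hj).2⟩, mem_univ _, Fin.ext rfl⟩
  rw [← hb, Finset.card_univ, Fintype.card_fin]

lemma fin_filter_ge_card {n r : ℕ} (h : r ≤ n) :
    ((univ : Finset (Fin n)).filter (fun i => r ≤ i.val)).card = n - r := by
  have h1 := Finset.card_filter_add_card_filter_not
    (s := (univ : Finset (Fin n))) (p := fun i => i.val < r)
  have h2 := fin_filter_lt_card h
  have h3 : (univ : Finset (Fin n)).card = n := by simp
  have h4 : (univ.filter (fun i : Fin n => ¬ i.val < r))
      = (univ.filter (fun i : Fin n => r ≤ i.val)) := by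
    apply Finset.filter_congr
    intro i _
    exact Nat.not_lt
  rw [h4] at h1
  omega

lemma sum_symCount {r n k : ℕ} (L : Fin r → Fin n → Fin k) :
    ∑ ℓ, symCount L ℓ = r * n := by
  have h := Finset.card_eq_sum_card_fiberwise
    (f := fun p : Fin r × Fin n => L p.1 p.2) (s := univ) (t := univ)
    (fun x _ => mem_univ _)
  rw [Finset.card_univ, Fintype.card_prod, Fintype.card_fin, Fintype.card_fin] at h
  exact h.symm

lemma count_split {n k r : ℕ} (h : r ≤ n) (S : Fin n → Fin n → Fin k) (ℓ : Fin k) :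
    symCount S ℓ =
      ((univ : Finset (Fin r × Fin n)).filter
        (fun p => S (Fin.castLE h p.1) p.2 = ℓ)).card +
      ((univ : Finset (Fin n × Fin n)).filter
        (fun q => S q.1 q.2 = ℓ ∧ r ≤ q.1.val)).card := by
  have hsplit := Finset.card_filter_add_card_filter_not
    (s := (univ : Finset (Fin n × Fin n)).filter (fun q => S q.1 q.2 = ℓ))
    (p := fun q => q.1.val < r)
  rw [Finset.filter_filter, Finset.filter_filter] at hsplit
  have htop : ((univ : Finset (Fin n × Fin n)).filter
        (fun q => S q.1 q.2 = ℓ ∧ q.1.val < r)).card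
      = ((univ : Finset (Fin r × Fin n)).filter
        (fun p => S (Fin.castLE h p.1) p.2 = ℓ)).card := by
    apply Finset.card_bij (fun q hq => ((⟨q.1.val, (mem_filter.mp hq).2.2⟩ : Fin r), q.2))
    · intro q hq
      rw [mem_filter] at hq ⊢
      refine ⟨mem_univ _, ?_⟩
      have hcast : Fin.castLE h (⟨q.1.val, hq.2.2⟩ : Fin r) = q.1 := Fin.ext rfl
      rw [hcast]
      exact hq.2.1
    · intro q hq q' hq' heq
      have h1 := congrArg (fun x : Fin r × Fin n => (Prod.fst x).val) heq
      have h2 := congrArg Prod.snd heq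
      exact Prod.ext (Fin.ext h1) h2
    · intro p hp
      refine ⟨(Fin.castLE h p.1, p.2), mem_filter.mpr ⟨mem_univ _, ?_, p.1.isLt⟩, ?_⟩
      · exact (mem_filter.mp hp).2
      · exact Prod.ext (Fin.ext rfl) rfl
  have hneg : ((univ : Finset (Fin n × Fin n)).filter
        (fun q => S q.1 q.2 = ℓ ∧ ¬ q.1.val < r))
      = ((univ : Finset (Fin n × Fin n)).filter
        (fun q => S q.1 q.2 = ℓ ∧ r ≤ q.1.val)) := by
    apply Finset.filter_congr
    intro q _
    exact and_congr_right (fun _ => Nat.not_lt)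
  rw [hneg] at hsplit
  rw [symCount]
  omega

/-- cross term: number of allowed pairs (j,ℓ) with j ∉ J, ℓ ∈ K. -/
def crX {n k : ℕ} (M : Fin n → Finset (Fin k)) (J : Finset (Fin n)) (K : Finset (Fin k)) : ℕ :=
  ∑ j ∈ Jᶜ, (K ∩ M j).card

lemma crX_submod {n k : ℕ} (M : Fin n → Finset (Fin k)) (J J' : Finset (Fin n))
    (K K' : Finset (Fin k)) :
    crX M (J ∪ J') (K ∪ K') + crX M (J ∩ J') (K ∩ K') ≤ crX M J K + crX M J' K' := by
  have hrw : ∀ (J : Finset (Fin n)) (K : Finset (Fin k)),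
      crX M J K = ∑ j, if j ∈ J then 0 else (K ∩ M j).card := by
    intro J K
    rw [crX]
    rw [show (Jᶜ : Finset (Fin n)) = univ.filter (· ∉ J) by ext j; simp]
    rw [Finset.sum_filter]
    exact Finset.sum_congr rfl (by intro j _; by_cases hj : j ∈ J <;> simp [hj])
  rw [hrw, hrw, hrw, hrw, ← Finset.sum_add_distrib, ← Finset.sum_add_distrib]
  apply Finset.sum_le_sum
  intro j _
  have hsub1 : ((K ∩ K') ∩ M j).card ≤ (K ∩ M j).card :=
    Finset.card_le_card (fun x hx => by
      rw [Finset.mem_inter] at hx ⊢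
      exact ⟨(Finset.mem_inter.mp hx.1).1, hx.2⟩)
  have hsub2 : ((K ∩ K') ∩ M j).card ≤ (K' ∩ M j).card :=
    Finset.card_le_card (fun x hx => by
      rw [Finset.mem_inter] at hx ⊢
      exact ⟨(Finset.mem_inter.mp hx.1).2, hx.2⟩)
  have h1 : (K ∪ K') ∩ M j = (K ∩ M j) ∪ (K' ∩ M j) := by
    ext x; simp only [Finset.mem_inter, Finset.mem_union]; tauto
  have h2 : (K ∩ K') ∩ M j = (K ∩ M j) ∩ (K' ∩ M j) := by
    ext x; simp only [Finset.mem_inter]; tauto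
  have hui : ((K ∪ K') ∩ M j).card + ((K ∩ K') ∩ M j).card
      = (K ∩ M j).card + (K' ∩ M j).card := by
    rw [h1, h2, Finset.card_union_add_card_inter]
  by_cases hj : j ∈ J <;> by_cases hj' : j ∈ J'
  · rw [if_pos (Finset.mem_union_left _ hj), if_pos (Finset.mem_inter.mpr ⟨hj, hj'⟩),
      if_pos hj, if_pos hj']
  · rw [if_pos (Finset.mem_union_left _ hj),
      if_neg (fun h => hj' (Finset.mem_inter.mp h).2), if_pos hj, if_neg hj']
    omega
  · rw [if_pos (Finset.mem_union_right _ hj'),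
      if_neg (fun h => hj (Finset.mem_inter.mp h).1), if_neg hj, if_pos hj']
    omega
  · rw [if_neg (fun h => (Finset.mem_union.mp h).elim hj hj'),
      if_neg (fun h => hj (Finset.mem_inter.mp h).1), if_neg hj, if_neg hj']
    omega

/-- Degree-constrained bipartite subgraph existence from the cut condition. -/
lemma degB {n k : ℕ} (N : ℕ) : ∀ (M : Fin n → Finset (Fin k)) (c : Fin n → ℕ) (d : Fin k → ℕ),
    (∑ ℓ, d ℓ = N) → (∑ j, c j = N) →
    (∀ J K, ∑ ℓ ∈ K, d ℓ ≤ ∑ j ∈ J, c j + crX M J K) →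
    ∃ E : Finset (Fin n × Fin k),
      (∀ p ∈ E, p.2 ∈ M p.1) ∧
      (∀ j, (E.filter (fun p => p.1 = j)).card = c j) ∧
      (∀ ℓ, (E.filter (fun p => p.2 = ℓ)).card = d ℓ) := by
  induction N using Nat.strong_induction_on with
  | _ N ih =>
  intro M c d hd hc H2
  classical
  rcases Nat.eq_zero_or_pos N with h0 | hpos
  · subst h0
    have hc0 : ∀ j, c j = 0 := fun j =>
      (Finset.sum_eq_zero_iff.mp hc) j (mem_univ j)
    have hd0 : ∀ ℓ, d ℓ = 0 := fun ℓ =>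
      (Finset.sum_eq_zero_iff.mp hd) ℓ (mem_univ ℓ)
    exact ⟨∅, by simp, fun j => by simp [hc0 j], fun ℓ => by simp [hd0 ℓ]⟩
  · -- pick ℓ* with d ℓ* ≥ 1
    obtain ⟨ℓs, -, hℓs⟩ : ∃ ℓ ∈ univ, d ℓ ≠ 0 :=
      Finset.exists_ne_zero_of_sum_ne_zero (by omega : ∑ ℓ, d ℓ ≠ 0)
    set tight : Finset (Fin n) → Finset (Fin k) → Prop :=
      fun J K => ∑ ℓ ∈ K, d ℓ = ∑ j ∈ J, c j + crX M J K with htight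
    have tight_union : ∀ J K J' K', tight J K → tight J' K' → tight (J ∪ J') (K ∪ K') := by
      intro J K J' K' h h'
      have hs := crX_submod M J J' K K'
      have h1 := H2 (J ∪ J') (K ∪ K')
      have h2 := H2 (J ∩ J') (K ∩ K')
      have e1 : ∑ ℓ ∈ K ∪ K', d ℓ + ∑ ℓ ∈ K ∩ K', d ℓ = ∑ ℓ ∈ K, d ℓ + ∑ ℓ ∈ K', d ℓ :=
        Finset.sum_union_inter
      have e2 : ∑ j ∈ J ∪ J', c j + ∑ j ∈ J ∩ J', c j = ∑ j ∈ J, c j + ∑ j ∈ J', c j :=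
        Finset.sum_union_inter
      simp only [htight] at h h' ⊢
      omega
    set F : Finset (Finset (Fin n) × Finset (Fin k)) :=
      (univ : Finset (Finset (Fin n) × Finset (Fin k))).filter
        (fun JK => tight JK.1 JK.2 ∧ ℓs ∉ JK.2) with hF
    set J₁ := F.sup Prod.fst with hJ₁
    set K₁ := F.sup Prod.snd with hK₁
    have htightsup : ∀ G : Finset (Finset (Fin n) × Finset (Fin k)),
        (∀ p ∈ G, tight p.1 p.2) → tight (G.sup Prod.fst) (G.sup Prod.snd) := by
      intro G
      induction G using Finset.induction_on with
      | empty => intro _; simp [htight, crX]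
      | insert _ _ hnotmem ih' =>
        intro hall
        rw [Finset.sup_insert, Finset.sup_insert]
        exact tight_union _ _ _ _ (hall _ (mem_insert_self _ _))
          (ih' fun p hp => hall p (mem_insert_of_mem hp))
    have htight1 : tight J₁ K₁ :=
      htightsup F (fun p hp => ((mem_filter.mp hp).2).1)
    have hℓK₁ : ℓs ∉ K₁ := by
      intro h
      obtain ⟨p, hpF, hp⟩ := Finset.mem_sup.mp h
      exact ((mem_filter.mp hpF).2).2 hp
    -- find a placeable column
    have hj : ∃ j, j ∉ J₁ ∧ 0 < c j ∧ ℓs ∈ M j := by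
      by_contra hno
      push_neg at hno
      set J₂ := J₁ ∪ (J₁ᶜ.filter (fun j => c j = 0)) with hJ₂
      set K₂ := insert ℓs K₁ with hK₂
      have hdisj : Disjoint J₁ (J₁ᶜ.filter (fun j => c j = 0)) :=
        Finset.disjoint_left.mpr (fun a ha hb => by
          have := (mem_filter.mp hb).1; simp at this; exact this ha)
      have hsumc : ∑ j ∈ J₂, c j = ∑ j ∈ J₁, c j := by
        rw [hJ₂, Finset.sum_union hdisj]
        have : ∑ j ∈ J₁ᶜ.filter (fun j => c j = 0), c j = 0 :=
          Finset.sum_eq_zero (fun j hj => (mem_filter.mp hj).2)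
        omega
      have hsumd : ∑ ℓ ∈ K₂, d ℓ = d ℓs + ∑ ℓ ∈ K₁, d ℓ := Finset.sum_insert hℓK₁
      have hcr : crX M J₂ K₂ ≤ crX M J₁ K₁ := by
        have hsub : (J₂ᶜ : Finset (Fin n)) ⊆ J₁ᶜ := by
          intro j hj; simp only [mem_compl] at hj ⊢
          exact fun h => hj (Finset.mem_union_left _ h)
        calc crX M J₂ K₂ = ∑ j ∈ J₂ᶜ, (K₁ ∩ M j).card := by
              apply Finset.sum_congr rfl
              intro j hjc
              simp only [mem_compl, hJ₂, Finset.mem_union, not_or] at hjc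
              have hcj : c j ≠ 0 := fun h =>
                hjc.2 (mem_filter.mpr ⟨mem_compl.mpr hjc.1, h⟩)
              have hnm : ℓs ∉ M j := hno j hjc.1 (by omega)
              congr 1
              rw [hK₂]; ext x; simp only [Finset.mem_inter, Finset.mem_insert]
              constructor
              · rintro ⟨(rfl | hx), hm⟩
                · exact absurd hm hnm
                · exact ⟨hx, hm⟩
              · rintro ⟨hx, hm⟩; exact ⟨Or.inr hx, hm⟩
          _ ≤ ∑ j ∈ J₁ᶜ, (K₁ ∩ M j).card :=
              Finset.sum_le_sum_of_subset hsub
          _ = crX M J₁ K₁ := rfl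
      have h2 := H2 J₂ K₂
      simp only [htight] at htight1
      omega
    obtain ⟨js, hjJ₁, hjc, hjM⟩ := hj
    -- reduced instance
    set M' := Function.update M js (M js \ {ℓs}) with hM'
    set c' := Function.update c js (c js - 1) with hc'
    set d' := Function.update d ℓs (d ℓs - 1) with hd'
    have hsumd' : ∑ ℓ, d' ℓ = N - 1 := by
      rw [hd', Finset.sum_update_of_mem (mem_univ _)]
      have := Finset.add_sum_erase univ d (mem_univ ℓs)
      rw [show (univ : Finset (Fin k)) \ {ℓs} = univ.erase ℓs by
        ext x; simp [Finset.mem_erase, and_comm]]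
      omega
    have hsumc' : ∑ j, c' j = N - 1 := by
      rw [hc', Finset.sum_update_of_mem (mem_univ _)]
      have := Finset.add_sum_erase univ c (mem_univ js)
      rw [show (univ : Finset (Fin n)) \ {js} = univ.erase js by
        ext x; simp [Finset.mem_erase, and_comm]]
      omega
    -- helpers for sums of updated functions
    have hdK_mem : ∀ K : Finset (Fin k), ℓs ∈ K → ∑ ℓ ∈ K, d' ℓ + 1 = ∑ ℓ ∈ K, d ℓ := by
      intro K hK
      rw [hd']
      rw [← Finset.add_sum_erase K d hK, ← Finset.add_sum_erase K _ hK]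
      rw [Function.update_self]
      have : ∑ ℓ ∈ K.erase ℓs, Function.update d ℓs (d ℓs - 1) ℓ = ∑ ℓ ∈ K.erase ℓs, d ℓ :=
        Finset.sum_congr rfl (fun x hx => Function.update_of_ne (Finset.ne_of_mem_erase hx) _ _)
      omega
    have hdK_not : ∀ K : Finset (Fin k), ℓs ∉ K → ∑ ℓ ∈ K, d' ℓ = ∑ ℓ ∈ K, d ℓ := by
      intro K hK
      exact Finset.sum_congr rfl (fun x hx =>
        Function.update_of_ne (fun h => hK (by rw [← h]; exact hx)) _ _)
    have hcJ_mem : ∀ J : Finset (Fin n), js ∈ J → ∑ j ∈ J, c' j + 1 = ∑ j ∈ J, c j := by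
      intro J hJ
      rw [hc']
      rw [← Finset.add_sum_erase J c hJ, ← Finset.add_sum_erase J _ hJ]
      rw [Function.update_self]
      have : ∑ j ∈ J.erase js, Function.update c js (c js - 1) j = ∑ j ∈ J.erase js, c j :=
        Finset.sum_congr rfl (fun x hx => Function.update_of_ne (Finset.ne_of_mem_erase hx) _ _)
      omega
    have hcJ_not : ∀ J : Finset (Fin n), js ∉ J → ∑ j ∈ J, c' j = ∑ j ∈ J, c j := by
      intro J hJ
      exact Finset.sum_congr rfl (fun x hx =>
        Function.update_of_ne (fun h => hJ (by rw [← h]; exact hx)) _ _)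
    -- crX for updated M
    have hcr_not : ∀ (J : Finset (Fin n)) (K : Finset (Fin k)), ℓs ∉ K →
        crX M' J K = crX M J K := by
      intro J K hK
      apply Finset.sum_congr rfl
      intro j _
      congr 1
      rw [hM']
      by_cases h : j = js
      · subst h; rw [Function.update_self]
        ext x; simp only [Finset.mem_inter, Finset.mem_sdiff, Finset.mem_singleton]
        constructor
        · rintro ⟨hx, hm, -⟩; exact ⟨hx, hm⟩
        · rintro ⟨hx, hm⟩; exact ⟨hx, hm, fun h => hK (h ▸ hx)⟩
      · rw [Function.update_of_ne h]
    have hcr_memJ : ∀ (J : Finset (Fin n)) (K : Finset (Fin k)), js ∈ J →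
        crX M' J K = crX M J K := by
      intro J K hJ
      apply Finset.sum_congr rfl
      intro j hjc
      have : j ≠ js := fun h => (mem_compl.mp hjc) (h ▸ hJ)
      rw [hM', Function.update_of_ne this]
    have hcr_mem : ∀ (J : Finset (Fin n)) (K : Finset (Fin k)), ℓs ∈ K → js ∉ J →
        crX M' J K + 1 = crX M J K := by
      intro J K hK hJ
      have hjc : js ∈ Jᶜ := mem_compl.mpr hJ
      rw [crX, crX, ← Finset.add_sum_erase _ _ hjc, ← Finset.add_sum_erase _ _ hjc]
      have hrest : ∑ j ∈ Jᶜ.erase js, (K ∩ M' j).card = ∑ j ∈ Jᶜ.erase js, (K ∩ M j).card :=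
        Finset.sum_congr rfl (fun x hx => by
          rw [hM', Function.update_of_ne (Finset.ne_of_mem_erase hx)])
      have hjs : (K ∩ M' js).card + 1 = (K ∩ M js).card := by
        have hmem : ℓs ∈ K ∩ M js := Finset.mem_inter.mpr ⟨hK, hjM⟩
        have heq : K ∩ (M js \ {ℓs}) = (K ∩ M js).erase ℓs := by
          ext x
          constructor
          · intro hx
            rcases Finset.mem_inter.mp hx with ⟨h1, h2⟩
            rcases Finset.mem_sdiff.mp h2 with ⟨h3, h4⟩
            exact Finset.mem_erase.mpr ⟨fun he => h4 (Finset.mem_singleton.mpr he),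
              Finset.mem_inter.mpr ⟨h1, h3⟩⟩
          · intro hx
            rcases Finset.mem_erase.mp hx with ⟨h1, h2⟩
            rcases Finset.mem_inter.mp h2 with ⟨h3, h4⟩
            exact Finset.mem_inter.mpr ⟨h3, Finset.mem_sdiff.mpr
              ⟨h4, fun he => h1 (Finset.mem_singleton.mp he)⟩⟩
        rw [hM', Function.update_self, heq, Finset.card_erase_of_mem hmem]
        exact Nat.succ_pred_eq_of_pos (Finset.card_pos.mpr ⟨ℓs, hmem⟩)
      omega
    have H2' : ∀ J K, ∑ ℓ ∈ K, d' ℓ ≤ ∑ j ∈ J, c' j + crX M' J K := by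
      intro J K
      by_cases hK : ℓs ∈ K
      · by_cases hJ : js ∈ J
        · have := H2 J K
          have e1 := hdK_mem K hK
          have e2 := hcJ_mem J hJ
          have e3 := hcr_memJ J K hJ
          omega
        · have := H2 J K
          have e1 := hdK_mem K hK
          have e2 := hcJ_not J hJ
          have e3 := hcr_mem J K hK hJ
          omega
      · by_cases hJ : js ∈ J
        · -- (J,K) is not tight
          have hnt : ¬ tight J K := by
            intro ht
            have : (J, K) ∈ F := mem_filter.mpr ⟨mem_univ _, ht, hK⟩
            have : J ⊆ J₁ := Finset.le_sup (f := Prod.fst) this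
            exact hjJ₁ (this hJ)
          simp only [htight] at hnt
          have hle := H2 J K
          have e1 := hdK_not K hK
          have e2 := hcJ_mem J hJ
          have e3 := hcr_memJ J K hJ
          omega
        · have := H2 J K
          have e1 := hdK_not K hK
          have e2 := hcJ_not J hJ
          have e3 := hcr_not J K hK
          omega
    obtain ⟨E', hE'M, hE'c, hE'd⟩ := ih (N - 1) (by omega) M' c' d' hsumd' hsumc' H2'
    have hnotin : (js, ℓs) ∉ E' := by
      intro h
      have := hE'M _ h
      simp only [hM', Function.update_self] at this
      exact (Finset.mem_sdiff.mp this).2 (Finset.mem_singleton_self _)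
    refine ⟨insert (js, ℓs) E', ?_, ?_, ?_⟩
    · intro p hp
      rcases Finset.mem_insert.mp hp with h | h
      · subst h; exact hjM
      · have := hE'M p h
        rw [hM'] at this
        by_cases hpj : p.1 = js
        · rw [hpj] at this ⊢; rw [Function.update_self] at this
          exact (Finset.mem_sdiff.mp this).1
        · rwa [Function.update_of_ne hpj] at this
    · intro j
      by_cases h : j = js
      · subst h
        rw [Finset.filter_insert, if_pos (show (j, ℓs).1 = j from rfl)]
        rw [Finset.card_insert_of_notMem (fun hm => hnotin (Finset.mem_filter.mp hm).1)]
        rw [hE'c j, hc', Function.update_self]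
        omega
      · rw [Finset.filter_insert, if_neg (show ¬((js, ℓs).1 = j) from Ne.symm h)]
        rw [hE'c j, hc', Function.update_of_ne h]
    · intro ℓ
      by_cases h : ℓ = ℓs
      · subst h
        rw [Finset.filter_insert, if_pos (show (js, ℓ).2 = ℓ from rfl)]
        rw [Finset.card_insert_of_notMem (fun hm => hnotin (Finset.mem_filter.mp hm).1)]
        rw [hE'd ℓ, hd', Function.update_self]
        omega
      · rw [Finset.filter_insert, if_neg (show ¬((js, ℓs).2 = ℓ) from Ne.symm h)]
        rw [hE'd ℓ, hd', Function.update_of_ne h]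

/-- Mendelsohn–Dulmage-style exchange: given an injective choice `f` and an
injective "reverse" assignment `g` defined on `C`, there is an injective choice
covering all of `C`. -/
lemma mergeMatch {α β : Type*} [Fintype α] [Fintype β] [DecidableEq α] [DecidableEq β]
    (A : α → Finset β) (C : Finset β)
    (g : β → α) (hg : Set.InjOn g C) (hgA : ∀ b ∈ C, b ∈ A (g b)) :
    ∀ (m : ℕ) (f : α → β) (W : Finset β), Function.Injective f → (∀ a, f a ∈ A a) →
      (∀ b ∈ C, (∀ a, f a ≠ b) → b ∈ W) → W.card ≤ m →
      ∃ f' : α → β, Function.Injective f' ∧ (∀ a, f' a ∈ A a) ∧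
        ∀ b ∈ C, ∃ a, f' a = b := by
  intro m
  induction m with
  | zero =>
    intro f W hfinj hfA hW hcard
    refine ⟨f, hfinj, hfA, fun b hb => ?_⟩
    by_contra hcov
    push_neg at hcov
    have hbW := hW b hb hcov
    have : W = ∅ := Finset.card_eq_zero.mp (Nat.le_antisymm hcard (Nat.zero_le _))
    rw [this] at hbW
    exact absurd hbW (Finset.notMem_empty b)
  | succ m ih =>
    intro f W hfinj hfA hW hcard
    by_cases hexu : ∃ b ∈ C, ∀ a, f a ≠ b
    · obtain ⟨c₀, hc₀C, hc₀f⟩ := hexu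
      set σ : β → β := fun b => f (g b) with hσ
      -- exit index exists
      have hexit : ∃ i, σ^[i] c₀ ∉ C := by
        by_contra hall
        push_neg at hall
        -- peeling injectivity
        have haux : ∀ i j, σ^[i] c₀ = σ^[j] c₀ → i = j := by
          intro i
          induction i with
          | zero =>
            intro j hj
            cases j with
            | zero => rfl
            | succ j' =>
              exfalso
              rw [Function.iterate_succ_apply'] at hj
              exact hc₀f (g (σ^[j'] c₀)) hj.symm
          | succ i' ih' =>
            intro j hj
            cases j with
            | zero =>
              exfalso
              rw [Function.iterate_succ_apply'] at hj
              exact hc₀f (g (σ^[i'] c₀)) hj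
            | succ j' =>
              rw [Function.iterate_succ_apply', Function.iterate_succ_apply'] at hj
              have := hfinj hj
              have := hg (hall i') (hall j') this
              exact congrArg Nat.succ (ih' j' this)
        obtain ⟨a, b, hab, heq⟩ :=
          Finite.exists_ne_map_eq_of_infinite (fun i : ℕ => σ^[i] c₀)
        exact hab (haux a b heq)
      set m₀ := Nat.find hexit with hm₀
      have hm₀spec : σ^[m₀] c₀ ∉ C := Nat.find_spec hexit
      have hm₀min : ∀ i, i < m₀ → σ^[i] c₀ ∈ C := by
        intro i hi
        by_contra h
        exact Nat.find_min hexit (by omega) h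
      have hm₀pos : 0 < m₀ := by
        rcases Nat.eq_zero_or_pos m₀ with h | h
        · exfalso; apply hm₀spec; rw [h]; exact hc₀C
        · exact h
      -- distinctness of the orbit within C
      have hdist : ∀ i j, i < m₀ → j < m₀ → σ^[i] c₀ = σ^[j] c₀ → i = j := by
        have key : ∀ i j, i ≤ m₀ → j ≤ m₀ → σ^[i] c₀ = σ^[j] c₀ → i = j := by
          intro i
          induction i with
          | zero =>
            intro j hi hj heq
            cases j with
            | zero => rfl
            | succ j' =>
              exfalso
              rw [Function.iterate_succ_apply'] at heq
              exact hc₀f (g (σ^[j'] c₀)) heq.symm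
          | succ i' ih' =>
            intro j hi hj heq
            cases j with
            | zero =>
              exfalso
              rw [Function.iterate_succ_apply'] at heq
              exact hc₀f (g (σ^[i'] c₀)) heq
            | succ j' =>
              rw [Function.iterate_succ_apply', Function.iterate_succ_apply'] at heq
              have h1 := hfinj heq
              have h2 := hg (hm₀min i' (by omega)) (hm₀min j' (by omega)) h1
              exact congrArg Nat.succ (ih' j' (by omega) (by omega) h2)
        intro i j hi hj heq
        exact key i j (by omega) (by omega) heq
      -- define the rerouted choice
      set f' : α → β := fun a =>
        if h : ∃ i, i < m₀ ∧ g (σ^[i] c₀) = a then σ^[Nat.find h] c₀ else f a with hf'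
      have hfind : ∀ (a : α) (h : ∃ i, i < m₀ ∧ g (σ^[i] c₀) = a),
          Nat.find h < m₀ ∧ g (σ^[Nat.find h] c₀) = a := fun _ h => Nat.find_spec h
      have hf'val : ∀ (a : α) (h : ∃ i, i < m₀ ∧ g (σ^[i] c₀) = a),
          f' a = σ^[Nat.find h] c₀ := by
        intro a h; rw [hf']; simp only [dif_pos h]
      have hf'neg : ∀ (a : α), ¬(∃ i, i < m₀ ∧ g (σ^[i] c₀) = a) → f' a = f a := by
        intro a h; rw [hf']; simp only [dif_neg h]
      have hf'orb : ∀ i, i < m₀ → f' (g (σ^[i] c₀)) = σ^[i] c₀ := by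
        intro i hi
        have h : ∃ i', i' < m₀ ∧ g (σ^[i'] c₀) = g (σ^[i] c₀) := ⟨i, hi, rfl⟩
        rw [hf'val _ h]
        obtain ⟨hlt, hgeq⟩ := hfind _ h
        have := hg (hm₀min _ hlt) (hm₀min _ hi) hgeq
        rw [this]
      -- f' is a valid choice
      have hf'A : ∀ a, f' a ∈ A a := by
        intro a
        by_cases h : ∃ i, i < m₀ ∧ g (σ^[i] c₀) = a
        · rw [hf'val _ h]
          obtain ⟨hlt, hgeq⟩ := hfind _ h
          have := hgA _ (hm₀min _ hlt)
          rwa [hgeq] at this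
        · rw [hf'neg _ h]; exact hfA a
      -- f' is injective
      have hf'inj : Function.Injective f' := by
        intro a a' heq
        by_cases h : ∃ i, i < m₀ ∧ g (σ^[i] c₀) = a <;>
          by_cases h' : ∃ i, i < m₀ ∧ g (σ^[i] c₀) = a'
        · rw [hf'val _ h, hf'val _ h'] at heq
          obtain ⟨hlt, hgeq⟩ := hfind _ h
          obtain ⟨hlt', hgeq'⟩ := hfind _ h'
          have := hdist _ _ hlt hlt' heq
          rw [← hgeq, ← hgeq', this]
        · exfalso
          rw [hf'val _ h, hf'neg _ h'] at heq
          obtain ⟨hlt, hgeq⟩ := hfind _ h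
          rcases Nat.eq_zero_or_pos (Nat.find h) with h0 | hpos
          · rw [h0] at heq; exact hc₀f a' heq.symm
          · have : σ^[Nat.find h] c₀ = f (g (σ^[Nat.find h - 1] c₀)) := by
              conv_lhs => rw [show Nat.find h = (Nat.find h - 1) + 1 by omega]
              rw [Function.iterate_succ_apply']
            rw [this] at heq
            have := hfinj heq.symm
            exact h' ⟨Nat.find h - 1, by omega, this.symm⟩
        · exfalso
          rw [hf'val _ h', hf'neg _ h] at heq
          obtain ⟨hlt, hgeq⟩ := hfind _ h'
          rcases Nat.eq_zero_or_pos (Nat.find h') with h0 | hpos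
          · rw [h0] at heq; exact hc₀f a heq
          · have : σ^[Nat.find h'] c₀ = f (g (σ^[Nat.find h' - 1] c₀)) := by
              conv_lhs => rw [show Nat.find h' = (Nat.find h' - 1) + 1 by omega]
              rw [Function.iterate_succ_apply']
            rw [this] at heq
            have := hfinj heq
            exact h ⟨Nat.find h' - 1, by omega, this.symm⟩
        · rw [hf'neg _ h, hf'neg _ h'] at heq
          exact hfinj heq
      -- the uncovered set shrinks
      have hshrink : ∀ b ∈ C, (∀ a, f' a ≠ b) → b ∈ W.erase c₀ := by
        intro b hbC hbf'
        rw [Finset.mem_erase]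
        constructor
        · intro hbc₀
          exact hbf' (g (σ^[0] c₀)) (by rw [hf'orb 0 hm₀pos]; exact hbc₀.symm)
        · refine hW b hbC (fun a hab => ?_)
          by_cases h : ∃ i, i < m₀ ∧ g (σ^[i] c₀) = a
          · obtain ⟨hlt, hgeq⟩ := hfind _ h
            set i := Nat.find h
            have hfa : f a = σ^[i + 1] c₀ := by
              rw [← hgeq, Function.iterate_succ_apply' σ i c₀]
            rcases Nat.lt_or_ge (i + 1) m₀ with hi1 | hi1
            · exact hbf' (g (σ^[i+1] c₀)) (by rw [hf'orb _ hi1, ← hfa, hab])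
            · have : i + 1 = m₀ := by omega
              apply hm₀spec
              rw [← this, ← hfa, hab]
              exact hbC
          · exact hbf' a (by rw [hf'neg _ h]; exact hab)
      have hc₀W : c₀ ∈ W := hW c₀ hc₀C hc₀f
      have hcard' : (W.erase c₀).card ≤ m := by
        have := Finset.card_erase_of_mem hc₀W
        omega
      exact ih f' (W.erase c₀) hf'inj hf'A hshrink hcard'
    · push_neg at hexu
      exact ⟨f, hfinj, hfA, hexu⟩

/-- Extract one injective "row" from column sets, covering all critical symbols. -/
lemma extract_row {n k : ℕ} (t : ℕ) (ht : 1 ≤ t) (S : Fin n → Finset (Fin k))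
    (hS : ∀ j, (S j).card = t)
    (hdeg : ∀ ℓ, (univ.filter (fun j => ℓ ∈ S j)).card ≤ t) :
    ∃ f : Fin n → Fin k, Function.Injective f ∧ (∀ j, f j ∈ S j) ∧
      ∀ ℓ, (univ.filter (fun j => ℓ ∈ S j)).card = t → ∃ j, f j = ℓ := by
  classical
  -- Hall condition for columns
  have hall1 : ∀ J : Finset (Fin n), J.card ≤ (J.biUnion S).card := by
    intro J
    have hsum : ∀ j ∈ J, (S j).card = ∑ ℓ ∈ J.biUnion S, (if ℓ ∈ S j then 1 else 0) := by
      intro j hj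
      have hset : (J.biUnion S).filter (· ∈ S j) = S j := by
        ext x
        simp only [mem_filter, Finset.mem_biUnion]
        exact ⟨fun h => h.2, fun h => ⟨⟨j, hj, h⟩, h⟩⟩
      calc (S j).card = ((J.biUnion S).filter (· ∈ S j)).card := by rw [hset]
        _ = ∑ ℓ ∈ J.biUnion S, (if ℓ ∈ S j then 1 else 0) := by rw [Finset.card_filter]
    have hbound : ∀ ℓ ∈ J.biUnion S, ∑ j ∈ J, (if ℓ ∈ S j then 1 else 0) ≤ t := by
      intro ℓ _
      calc ∑ j ∈ J, (if ℓ ∈ S j then 1 else 0) = (J.filter (fun j => ℓ ∈ S j)).card := by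
            rw [Finset.card_filter]
        _ ≤ (univ.filter (fun j => ℓ ∈ S j)).card :=
            Finset.card_le_card (Finset.filter_subset_filter _ (Finset.subset_univ J))
        _ ≤ t := hdeg ℓ
    have hfin : t * J.card ≤ t * (J.biUnion S).card := by
      calc t * J.card = ∑ _j ∈ J, t := by rw [Finset.sum_const, smul_eq_mul, Nat.mul_comm]
        _ = ∑ j ∈ J, (S j).card := Finset.sum_congr rfl (fun j _ => (hS j).symm)
        _ = ∑ j ∈ J, ∑ ℓ ∈ J.biUnion S, (if ℓ ∈ S j then 1 else 0) :=
            Finset.sum_congr rfl hsum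
        _ = ∑ ℓ ∈ J.biUnion S, ∑ j ∈ J, (if ℓ ∈ S j then 1 else 0) := Finset.sum_comm
        _ ≤ ∑ _ℓ ∈ J.biUnion S, t := Finset.sum_le_sum hbound
        _ = (J.biUnion S).card * t := by rw [Finset.sum_const, smul_eq_mul]
        _ = t * (J.biUnion S).card := Nat.mul_comm _ _
    exact Nat.le_of_mul_le_mul_left hfin (by omega)
  obtain ⟨f, hfinj, hfA⟩ :=
    (Finset.all_card_le_biUnion_card_iff_exists_injective S).mp hall1
  -- critical symbols
  set C := univ.filter (fun ℓ : Fin k => (univ.filter (fun j => ℓ ∈ S j)).card = t) with hC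
  rcases Finset.eq_empty_or_nonempty C with hCemp | ⟨c₀, hc₀C⟩
  · refine ⟨f, hfinj, hfA, fun ℓ hℓ => ?_⟩
    exfalso
    have : ℓ ∈ C := mem_filter.mpr ⟨mem_univ _, hℓ⟩
    simp [hCemp] at this
  · -- Hall condition for critical symbols
    set T : {x // x ∈ C} → Finset (Fin n) := fun c => univ.filter (fun j => c.1 ∈ S j) with hT
    have hall2 : ∀ s : Finset {x // x ∈ C}, s.card ≤ (s.biUnion T).card := by
      intro s
      have hTcard : ∀ c : {x // x ∈ C}, (T c).card = t := fun c => (mem_filter.mp c.2).2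
      have hsum : ∀ c ∈ s, (T c).card = ∑ j ∈ s.biUnion T, (if j ∈ T c then 1 else 0) := by
        intro c hc
        have hset : (s.biUnion T).filter (· ∈ T c) = T c := by
          ext x
          simp only [mem_filter, Finset.mem_biUnion]
          exact ⟨fun h => h.2, fun h => ⟨⟨c, hc, h⟩, h⟩⟩
        calc (T c).card = ((s.biUnion T).filter (· ∈ T c)).card := by rw [hset]
          _ = ∑ j ∈ s.biUnion T, (if j ∈ T c then 1 else 0) := by rw [Finset.card_filter]
      have hbound : ∀ j ∈ s.biUnion T, ∑ c ∈ s, (if j ∈ T c then 1 else 0) ≤ t := by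
        intro j _
        calc ∑ c ∈ s, (if j ∈ T c then 1 else 0) = (s.filter (fun c => j ∈ T c)).card := by
              rw [Finset.card_filter]
          _ ≤ (S j).card := by
              apply Finset.card_le_card_of_injOn (fun c => c.1)
              · intro c hc
                have : j ∈ T c := (mem_filter.mp hc).2
                exact (mem_filter.mp this).2
              · intro c hc c' hc' hcc
                exact Subtype.ext hcc
          _ = t := hS j
      have hfin : t * s.card ≤ t * (s.biUnion T).card := by
        calc t * s.card = ∑ _c ∈ s, t := by rw [Finset.sum_const, smul_eq_mul, Nat.mul_comm]
          _ = ∑ c ∈ s, (T c).card := Finset.sum_congr rfl (fun c _ => (hTcard c).symm)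
          _ = ∑ c ∈ s, ∑ j ∈ s.biUnion T, (if j ∈ T c then 1 else 0) :=
              Finset.sum_congr rfl hsum
          _ = ∑ j ∈ s.biUnion T, ∑ c ∈ s, (if j ∈ T c then 1 else 0) := Finset.sum_comm
          _ ≤ ∑ _j ∈ s.biUnion T, t := Finset.sum_le_sum hbound
          _ = (s.biUnion T).card * t := by rw [Finset.sum_const, smul_eq_mul]
          _ = t * (s.biUnion T).card := Nat.mul_comm _ _
      exact Nat.le_of_mul_le_mul_left hfin (by omega)
    obtain ⟨g₀, hg₀inj, hg₀A⟩ :=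
      (Finset.all_card_le_biUnion_card_iff_exists_injective T).mp hall2
    set g : Fin k → Fin n := fun b => if h : b ∈ C then g₀ ⟨b, h⟩ else g₀ ⟨c₀, hc₀C⟩ with hg
    have hginj : Set.InjOn g (C : Set (Fin k)) := by
      intro b hb b' hb' heq
      have hb : b ∈ C := hb
      have hb' : b' ∈ C := hb'
      rw [hg] at heq
      simp only [dif_pos hb, dif_pos hb'] at heq
      have := hg₀inj heq
      exact congrArg Subtype.val this
    have hgA : ∀ b ∈ C, b ∈ S (g b) := by
      intro b hb
      rw [hg]
      simp only [dif_pos hb]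
      have := hg₀A ⟨b, hb⟩
      exact (mem_filter.mp this).2
    obtain ⟨f', hf'inj, hf'A, hf'cov⟩ := mergeMatch S C g hginj hgA
      C.card f C hfinj hfA (fun b hb _ => hb) le_rfl
    refine ⟨f', hf'inj, hf'A, fun ℓ hℓ => ?_⟩
    exact hf'cov ℓ (mem_filter.mpr ⟨mem_univ _, hℓ⟩)

lemma split_rows {n k : ℕ} : ∀ (t : ℕ) (E : Finset (Fin n × Fin k)),
    (∀ j, (E.filter (fun p => p.1 = j)).card = t) →
    (∀ ℓ, (E.filter (fun p => p.2 = ℓ)).card ≤ t) →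
    ∃ F : Fin t → Fin n → Fin k,
      (∀ i, Function.Injective (F i)) ∧
      (∀ i j, (j, F i j) ∈ E) ∧
      (∀ i i' j, F i j = F i' j → i = i') ∧
      (∀ j ℓ, ((j, ℓ) ∈ E ↔ ∃ i, F i j = ℓ)) := by
  intro t
  induction t with
  | zero =>
    intro E hc _hd
    refine ⟨Fin.elim0, fun i => i.elim0, fun i => i.elim0, fun i => i.elim0, ?_⟩
    intro j ℓ
    constructor
    · intro h
      exfalso
      have h1 := hc j
      have h2 : (j, ℓ) ∈ E.filter (fun p => p.1 = j) := mem_filter.mpr ⟨h, rfl⟩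
      have h3 := Finset.card_pos.mpr ⟨_, h2⟩
      omega
    · rintro ⟨i, -⟩; exact i.elim0
  | succ t ih =>
    intro E hc hd
    set S : Fin n → Finset (Fin k) :=
      fun j => (E.filter (fun p => p.1 = j)).image Prod.snd with hs
    have hmemS : ∀ j ℓ, ℓ ∈ S j ↔ (j, ℓ) ∈ E := by
      intro j ℓ
      rw [hs]
      simp only [Finset.mem_image, mem_filter]
      constructor
      · rintro ⟨p, ⟨hpE, hp1⟩, hp2⟩
        have : p = (j, ℓ) := Prod.ext hp1 hp2
        rwa [this] at hpE
      · intro h; exact ⟨(j, ℓ), ⟨h, rfl⟩, rfl⟩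
    have hSc : ∀ j, (S j).card = t + 1 := by
      intro j
      rw [hs]
      rw [Finset.card_image_of_injOn, hc j]
      intro p hp q hq hpq
      have hp1 : p.1 = j := (mem_filter.mp hp).2
      have hq1 : q.1 = j := (mem_filter.mp hq).2
      exact Prod.ext (hp1.trans hq1.symm) hpq
    have hdegS : ∀ ℓ, (univ.filter (fun j => ℓ ∈ S j)).card = (E.filter (fun p => p.2 = ℓ)).card := by
      intro ℓ
      apply Finset.card_bij (fun j _ => (j, ℓ))
      · intro j hj
        rw [mem_filter] at hj ⊢
        exact ⟨(hmemS j ℓ).mp hj.2, rfl⟩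
      · intro j _ j' _ hjj
        exact congrArg Prod.fst hjj
      · intro p hp
        rw [mem_filter] at hp
        refine ⟨p.1, mem_filter.mpr ⟨mem_univ _, ?_⟩, ?_⟩
        · rw [hmemS, ← hp.2]; exact hp.1
        · rw [← hp.2]
      
    obtain ⟨f, hfinj, hfS, hfcov⟩ := extract_row (t+1) (by omega) S hSc
      (fun ℓ => by rw [hdegS ℓ]; exact hd ℓ)
    have hrow : ∀ j, (j, f j) ∈ E := fun j => (hmemS j (f j)).mp (hfS j)
    set E' := E \ univ.image (fun j => (j, f j)) with hE'
    have hE'mem : ∀ p, p ∈ E' ↔ p ∈ E ∧ p.2 ≠ f p.1 := by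
      intro p
      rw [hE', Finset.mem_sdiff]
      constructor
      · rintro ⟨hpE, hpim⟩
        refine ⟨hpE, fun h => hpim ?_⟩
        rw [Finset.mem_image]
        exact ⟨p.1, mem_univ _, by rw [← h]⟩
      · rintro ⟨hpE, hpne⟩
        refine ⟨hpE, fun him => ?_⟩
        rw [Finset.mem_image] at him
        obtain ⟨j, -, hj⟩ := him
        apply hpne
        rw [← hj]
    have hc' : ∀ j, (E'.filter (fun p => p.1 = j)).card = t := by
      intro j
      have hseteq : E'.filter (fun p => p.1 = j) = (E.filter (fun p => p.1 = j)).erase (j, f j) := by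
        ext p
        rw [mem_filter, Finset.mem_erase, mem_filter, hE'mem]
        constructor
        · rintro ⟨⟨hpE, hpne⟩, hp1⟩
          exact ⟨fun h => hpne (by rw [h]), hpE, hp1⟩
        · rintro ⟨hne, hpE, hp1⟩
          refine ⟨⟨hpE, fun h => hne ?_⟩, hp1⟩
          subst hp1
          exact Prod.ext rfl h
      rw [hseteq, Finset.card_erase_of_mem (s := E.filter (fun p => p.1 = j))
        (mem_filter.mpr ⟨hrow j, rfl⟩), hc j]
      omega
    have hd' : ∀ ℓ, (E'.filter (fun p => p.2 = ℓ)).card ≤ t := by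
      intro ℓ
      by_cases hcov : ∃ j, f j = ℓ
      · obtain ⟨j₀, hj₀⟩ := hcov
        have hseteq : E'.filter (fun p => p.2 = ℓ) = (E.filter (fun p => p.2 = ℓ)).erase (j₀, ℓ) := by
          ext p
          rw [mem_filter, Finset.mem_erase, mem_filter, hE'mem]
          constructor
          · rintro ⟨⟨hpE, hpne⟩, hp2⟩
            refine ⟨fun h => hpne ?_, hpE, hp2⟩
            rw [h]; exact hj₀.symm
          · rintro ⟨hne, hpE, hp2⟩
            refine ⟨⟨hpE, fun h => hne ?_⟩, hp2⟩
            have : p.1 = j₀ := by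
              apply hfinj
              rw [← h, hp2]
              exact hj₀.symm
            exact Prod.ext this hp2
        rw [hseteq, Finset.card_erase_of_mem (s := E.filter (fun p => p.2 = ℓ))
          (mem_filter.mpr ⟨by rw [← hj₀]; exact hrow j₀, rfl⟩)]
        have := hd ℓ
        omega
      · have hseteq : E'.filter (fun p => p.2 = ℓ) = E.filter (fun p => p.2 = ℓ) := by
          ext p
          rw [mem_filter, mem_filter, hE'mem]
          constructor
          · rintro ⟨⟨hpE, -⟩, hp2⟩; exact ⟨hpE, hp2⟩
          · rintro ⟨hpE, hp2⟩
            refine ⟨⟨hpE, fun h => hcov ⟨p.1, ?_⟩⟩, hp2⟩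
            rw [← h, hp2]
        rw [hseteq]
        rcases Nat.lt_or_ge (E.filter (fun p => p.2 = ℓ)).card (t + 1) with h | h
        · omega
        · exfalso
          have hcrit : (univ.filter (fun j => ℓ ∈ S j)).card = t + 1 := by
            rw [hdegS ℓ]
            have := hd ℓ
            omega
          exact hcov (hfcov ℓ hcrit)
    obtain ⟨F', hF'inj, hF'mem, hF'dist, hF'iff⟩ := ih E' hc' hd'
    refine ⟨fun i => Fin.cases f F' i, ?_, ?_, ?_, ?_⟩
    · intro i
      induction i using Fin.cases with
      | zero => simpa using hfinj
      | succ i' => simpa using hF'inj i'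
    · intro i j
      induction i using Fin.cases with
      | zero => simpa using hrow j
      | succ i' =>
        simp only [Fin.cases_succ]
        exact ((hE'mem _).mp (hF'mem i' j)).1
    · intro i i' j
      induction i using Fin.cases with
      | zero =>
        induction i' using Fin.cases with
        | zero => intro _; rfl
        | succ b =>
          simp only [Fin.cases_zero, Fin.cases_succ]
          intro h
          exfalso
          have := ((hE'mem _).mp (hF'mem b j)).2
          exact this h.symm
      | succ a =>
        induction i' using Fin.cases with
        | zero =>
          simp only [Fin.cases_zero, Fin.cases_succ]
          intro h
          exfalso
          have := ((hE'mem _).mp (hF'mem a j)).2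
          exact this h
        | succ b =>
          simp only [Fin.cases_succ]
          intro h
          exact congrArg Fin.succ (hF'dist a b j h)
    · intro j ℓ
      constructor
      · intro hpE
        by_cases h : ℓ = f j
        · exact ⟨0, by simp [h.symm]⟩
        · have : (j, ℓ) ∈ E' := (hE'mem _).mpr ⟨hpE, h⟩
          obtain ⟨i, hi⟩ := (hF'iff j ℓ).mp this
          exact ⟨i.succ, by simpa using hi⟩
      · rintro ⟨i, hi⟩
        revert hi
        induction i using Fin.cases with
        | zero =>
          intro hi
          simp only [Fin.cases_zero] at hi
          rw [← hi]; exact hrow j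
        | succ i' =>
          intro hi
          simp only [Fin.cases_succ] at hi
          rw [← hi]
          exact ((hE'mem _).mp (hF'mem i' j)).1

/-- Hall-type completion, mixed form: an `r × n` `ρ`-latin rectangle completes
to an `n × n` `ρ`-latin square iff `ρ_ℓ - e_ℓ ≤ n - r` for all `ℓ` and
`∑_{ℓ∈K}(ρ_ℓ - e_ℓ) ≤ |J|(n-r) + μ_K([n] \ J)` for all `J ⊆ [n]`, `K ⊆ [k]`. -/
theorem stmt6 (n k r : ℕ) (hr : 1 ≤ r) (hrn : r < n) (hnk : n ≤ k)
    (ρ : Fin k → ℕ) (hρ1 : ∀ ℓ, 1 ≤ ρ ℓ) (hρn : ∀ ℓ, ρ ℓ ≤ n)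
    (hsum : ∑ ℓ, ρ ℓ = n ^ 2)
    (L : Fin r → Fin n → Fin k) (hL : latinArr L)
    (he : ∀ ℓ, symCount L ℓ ≤ ρ ℓ) :
    (∃ S : Fin n → Fin n → Fin k, rhoLatinSquare ρ S ∧ extends' hrn.le le_rfl L S) ↔
      ((∀ ℓ, ρ ℓ - symCount L ℓ ≤ n - r) ∧
        ∀ (J : Finset (Fin n)) (K : Finset (Fin k)),
          ∑ ℓ ∈ K, (ρ ℓ - symCount L ℓ) ≤
            J.card * (n - r) + ∑ j ∈ Jᶜ, muSymCol L K j) := by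
  classical
  constructor
  · rintro ⟨S, ⟨⟨hSrow, hScol⟩, hScount⟩, hext⟩
    set bots : Fin k → Finset (Fin n × Fin n) :=
      fun ℓ => (univ : Finset (Fin n × Fin n)).filter
        (fun q => S q.1 q.2 = ℓ ∧ r ≤ q.1.val) with hbots
    have hkey : ∀ ℓ, ρ ℓ = symCount L ℓ + (bots ℓ).card := by
      intro ℓ
      have h1 := count_split hrn.le S ℓ
      have htop : ((univ : Finset (Fin r × Fin n)).filter
          (fun p => S (Fin.castLE hrn.le p.1) p.2 = ℓ)).card = symCount L ℓ := by
        rw [symCount]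
        congr 1
        apply Finset.filter_congr
        intro p _
        rw [show S (Fin.castLE hrn.le p.1) p.2 = L p.1 p.2 from hext p.1 p.2]
      rw [htop] at h1
      rw [← hScount ℓ, h1, hbots]
    have hcol_missing : ∀ (q : Fin n × Fin n), r ≤ q.1.val →
        ∀ i : Fin r, L i q.2 ≠ S q.1 q.2 := by
      intro q hq i hLi
      have h1 : S (Fin.castLE hrn.le i) q.2 = L i q.2 := hext i q.2
      rw [hLi] at h1
      have h2 := hScol q.2 h1
      have hv := congrArg Fin.val h2
      have h3 := i.isLt
      simp only [Fin.coe_castLE] at hv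
      omega
    constructor
    · intro ℓ
      have hb : (bots ℓ).card ≤ n - r := by
        rw [← fin_filter_ge_card hrn.le]
        apply Finset.card_le_card_of_injOn (fun q => q.1)
        · intro q hq
          obtain ⟨-, -, hqr⟩ := mem_filter.mp hq
          exact mem_filter.mpr ⟨mem_univ _, hqr⟩
        · intro q hq q' hq' heq
          obtain ⟨-, hql, -⟩ := mem_filter.mp hq
          obtain ⟨-, hql', -⟩ := mem_filter.mp hq'
          have heq' : q.1 = q'.1 := heq
          have h2 : q.2 = q'.2 := by
            apply hSrow q.1
            rw [hql, heq', hql']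
          exact Prod.ext heq' h2
      have := hkey ℓ
      omega
    · intro J K
      set BK := (univ : Finset (Fin n × Fin n)).filter
        (fun q => S q.1 q.2 ∈ K ∧ r ≤ q.1.val) with hBK
      have hsum1 : ∑ ℓ ∈ K, (ρ ℓ - symCount L ℓ) = ∑ ℓ ∈ K, (bots ℓ).card :=
        Finset.sum_congr rfl (fun ℓ _ => by
          have h1 := hkey ℓ
          omega)
      have hsum2 : BK.card = ∑ ℓ ∈ K, (bots ℓ).card := by
        have hf := Finset.card_eq_sum_card_fiberwise
          (f := fun q : Fin n × Fin n => S q.1 q.2) (s := BK) (t := K)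
          (fun q hq => ((mem_filter.mp hq).2).1)
        rw [hf]
        apply Finset.sum_congr rfl
        intro ℓ hℓ
        congr 1
        ext q
        constructor
        · intro hq
          obtain ⟨hqBK, hql⟩ := mem_filter.mp hq
          obtain ⟨-, -, hqr⟩ := mem_filter.mp hqBK
          exact mem_filter.mpr ⟨mem_univ _, hql, hqr⟩
        · intro hq
          obtain ⟨-, hql, hqr⟩ := mem_filter.mp hq
          exact mem_filter.mpr ⟨mem_filter.mpr ⟨mem_univ _, by rw [hql]; exact hℓ, hqr⟩, hql⟩
      have hsplit := Finset.card_filter_add_card_filter_not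
        (s := BK) (p := fun q => q.2 ∈ J)
      have hpart1 : (BK.filter (fun q => q.2 ∈ J)).card ≤ J.card * (n - r) := by
        have hle : (BK.filter (fun q => q.2 ∈ J)).card
            ≤ (J ×ˢ (univ.filter (fun i : Fin n => r ≤ i.val))).card := by
          apply Finset.card_le_card_of_injOn (fun q => (q.2, q.1))
          · intro q hq
            obtain ⟨hqBK, hqJ⟩ := mem_filter.mp hq
            obtain ⟨-, -, hqr⟩ := mem_filter.mp hqBK
            exact Finset.mem_product.mpr ⟨hqJ, mem_filter.mpr ⟨mem_univ _, hqr⟩⟩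
          · intro q _ q' _ heq
            have h1 := congrArg Prod.fst heq
            have h2 := congrArg Prod.snd heq
            exact Prod.ext h2 h1
        rw [Finset.card_product, fin_filter_ge_card hrn.le] at hle
        exact hle
      have hpart2 : (BK.filter (fun q => ¬ q.2 ∈ J)).card ≤ ∑ j ∈ Jᶜ, muSymCol L K j := by
        have hf := Finset.card_eq_sum_card_fiberwise
          (f := fun q : Fin n × Fin n => q.2) (s := BK.filter (fun q => ¬ q.2 ∈ J)) (t := Jᶜ)
          (fun q hq => Finset.mem_compl.mpr (mem_filter.mp hq).2)
        rw [hf]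
        apply Finset.sum_le_sum
        intro j hj
        rw [muSymCol]
        apply Finset.card_le_card_of_injOn (fun q => S q.1 q.2)
        · intro q hq
          obtain ⟨hq1, hq2⟩ := mem_filter.mp hq
          obtain ⟨hqBK, hqnJ⟩ := mem_filter.mp hq1
          obtain ⟨-, hqK, hqr⟩ := mem_filter.mp hqBK
          apply mem_filter.mpr
          refine ⟨hqK, fun i => ?_⟩
          rw [← hq2]
          exact hcol_missing q hqr i
        · intro q hq q' hq' heq
          obtain ⟨hq1, hq2⟩ := mem_filter.mp hq
          obtain ⟨hqBK, -⟩ := mem_filter.mp hq1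
          obtain ⟨-, -, hqr⟩ := mem_filter.mp hqBK
          obtain ⟨hq1', hq2'⟩ := mem_filter.mp hq'
          have heq' : S q.1 q.2 = S q'.1 q'.2 := heq
          have hj2 : q.2 = j := hq2
          have hj2' : q'.2 = j := hq2'
          rw [hj2, hj2'] at heq'
          have h1 := hScol j heq'
          exact Prod.ext h1 (hj2.trans hj2'.symm)
      omega
  · rintro ⟨hcond1, hcond2⟩
    set M : Fin n → Finset (Fin k) :=
      fun j => univ.filter (fun ℓ => ∀ i, L i j ≠ ℓ) with hM
    set d : Fin k → ℕ := fun ℓ => ρ ℓ - symCount L ℓ with hd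
    set c : Fin n → ℕ := fun _ => n - r with hc
    have hnn : n ^ 2 = n * n := sq n
    have hmul : (n - r) * n + r * n = n * n := by
      rw [← Nat.add_mul, Nat.sub_add_cancel hrn.le]
    have hse := sum_symCount L
    have hsd : ∑ ℓ, d ℓ = (n - r) * n := by
      have hadd : ∑ ℓ, (d ℓ + symCount L ℓ) = ∑ ℓ, ρ ℓ :=
        Finset.sum_congr rfl (fun ℓ _ => by
          have h1 := he ℓ
          simp only [hd]
          omega)
      rw [Finset.sum_add_distrib] at hadd
      omega
    have hsc : ∑ j, c j = (n - r) * n := by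
      simp only [hc]
      rw [Finset.sum_const, smul_eq_mul, Finset.card_univ, Fintype.card_fin, Nat.mul_comm]
    have hH2 : ∀ J K, ∑ ℓ ∈ K, d ℓ ≤ ∑ j ∈ J, c j + crX M J K := by
      intro J K
      have h := hcond2 J K
      have h1 : ∑ j ∈ J, c j = J.card * (n - r) := by
        simp only [hc]
        rw [Finset.sum_const, smul_eq_mul]
      have h2 : crX M J K = ∑ j ∈ Jᶜ, muSymCol L K j := by
        apply Finset.sum_congr rfl
        intro j _
        have hKM : K ∩ M j = K.filter (fun ℓ => ∀ i, L i j ≠ ℓ) := by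
          ext x
          constructor
          · intro hx
            have h1 := Finset.mem_inter.mp hx
            have h2 := (mem_filter.mp h1.2).2
            exact mem_filter.mpr ⟨h1.1, h2⟩
          · intro hx
            have h1 := mem_filter.mp hx
            exact Finset.mem_inter.mpr ⟨h1.1, mem_filter.mpr ⟨mem_univ _, h1.2⟩⟩
        rw [hKM, muSymCol]
      rw [h1, h2]
      exact h
    obtain ⟨E, hEM, hEc, hEd⟩ := degB ((n - r) * n) M c d hsd hsc hH2
    obtain ⟨F, hFinj, hFmem, hFdist, hFiff⟩ := split_rows (n - r) E hEc
      (fun ℓ => by rw [hEd ℓ]; exact hcond1 ℓ)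
    set Sq : Fin n → Fin n → Fin k := fun i j =>
      if hi : i.val < r then L ⟨i.val, hi⟩ j
      else F ⟨i.val - r, by have := i.isLt; omega⟩ j with hSq
    have hmiss : ∀ (b : Fin (n - r)) (j : Fin n) (i : Fin r), L i j ≠ F b j := by
      intro b j i
      have hmem := hEM (j, F b j) (hFmem b j)
      rw [hM, mem_filter] at hmem
      exact hmem.2 i
    have hextSq : ∀ (i : Fin r) (j : Fin n), Sq (Fin.castLE hrn.le i) j = L i j := by
      intro i j
      simp only [hSq]
      exact dif_pos i.isLt
    have hbotSq : ∀ (i : Fin n) (hi : ¬ i.val < r) (j : Fin n),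
        Sq i j = F ⟨i.val - r, by have := i.isLt; omega⟩ j := by
      intro i hi j
      simp only [hSq]
      exact dif_neg hi
    refine ⟨Sq, ⟨⟨?_, ?_⟩, ?_⟩, fun i j => hextSq i j⟩
    · -- rows injective
      intro i j j' heq
      by_cases hi : i.val < r
      · have h1 : Sq i j = L ⟨i.val, hi⟩ j := by simp only [hSq]; exact dif_pos hi
        have h2 : Sq i j' = L ⟨i.val, hi⟩ j' := by simp only [hSq]; exact dif_pos hi
        rw [h1, h2] at heq
        exact hL.1 _ heq
      · rw [hbotSq i hi j, hbotSq i hi j'] at heq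
        exact hFinj _ heq
    · -- columns injective
      intro j i i' heq
      simp only at heq
      by_cases hi : i.val < r <;> by_cases hi' : i'.val < r
      · have h1 : Sq i j = L ⟨i.val, hi⟩ j := by simp only [hSq]; exact dif_pos hi
        have h2 : Sq i' j = L ⟨i'.val, hi'⟩ j := by simp only [hSq]; exact dif_pos hi'
        rw [h1, h2] at heq
        have := hL.2 j heq
        have hv := congrArg Fin.val this
        exact Fin.ext hv
      · have h1 : Sq i j = L ⟨i.val, hi⟩ j := by simp only [hSq]; exact dif_pos hi
        rw [h1, hbotSq i' hi' j] at heq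
        exact absurd heq (hmiss _ j _)
      · have h2 : Sq i' j = L ⟨i'.val, hi'⟩ j := by simp only [hSq]; exact dif_pos hi'
        rw [h2, hbotSq i hi j] at heq
        exact absurd heq.symm (hmiss _ j _)
      · rw [hbotSq i hi j, hbotSq i' hi' j] at heq
        have := hFdist _ _ j heq
        have hv := congrArg Fin.val this
        simp only at hv
        have h1 := i.isLt
        have h2 := i'.isLt
        exact Fin.ext (by omega)
    · -- symbol counts
      intro ℓ
      rw [count_split hrn.le Sq ℓ]
      have htop : ((univ : Finset (Fin r × Fin n)).filter
          (fun p => Sq (Fin.castLE hrn.le p.1) p.2 = ℓ)).card = symCount L ℓ := by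
        rw [symCount]
        congr 1
        apply Finset.filter_congr
        intro p _
        rw [hextSq p.1 p.2]
      have hbot : ((univ : Finset (Fin n × Fin n)).filter
          (fun q => Sq q.1 q.2 = ℓ ∧ r ≤ q.1.val)).card
          = (E.filter (fun p => p.2 = ℓ)).card := by
        apply Finset.card_bij (fun q _ => (q.2, ℓ))
        · intro q hq
          rw [mem_filter] at hq
          obtain ⟨-, hSql, hqr⟩ := hq
          rw [mem_filter]
          refine ⟨?_, rfl⟩
          rw [hbotSq q.1 (by omega) q.2] at hSql
          rw [← hSql]
          exact hFmem _ q.2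
        · intro q hq q' hq' heq
          rw [mem_filter] at hq hq'
          obtain ⟨-, hSql, hqr⟩ := hq
          obtain ⟨-, hSql', hqr'⟩ := hq'
          have h2 : q.2 = q'.2 := congrArg Prod.fst heq
          rw [hbotSq q.1 (by omega) q.2] at hSql
          rw [hbotSq q'.1 (by omega) q'.2] at hSql'
          rw [← h2] at hSql'
          have := hFdist _ _ q.2 (hSql.trans hSql'.symm)
          have hv := congrArg Fin.val this
          simp only at hv
          have hlt := q.1.isLt
          have hlt' := q'.1.isLt
          exact Prod.ext (Fin.ext (by omega)) h2
        · intro p hp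
          rw [mem_filter] at hp
          obtain ⟨hpE, hp2⟩ := hp
          obtain ⟨b, hb⟩ := (hFiff p.1 ℓ).mp (by rw [← hp2]; exact Prod.mk.eta ▸ hpE)
          have hblt := b.isLt
          refine ⟨(⟨b.val + r, by omega⟩, p.1), ?_, ?_⟩
          · rw [mem_filter]
            refine ⟨mem_univ _, ?_, by show r ≤ b.val + r; omega⟩
            rw [hbotSq ⟨b.val + r, by omega⟩ (by show ¬ b.val + r < r; omega) p.1]
            have hidx : (⟨(⟨b.val + r, by omega⟩ : Fin n).val - r,
                by have := (⟨b.val + r, by omega⟩ : Fin n).isLt; omega⟩ : Fin (n - r)) = b :=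
              Fin.ext (by show b.val + r - r = b.val; omega)
            rw [hidx]
            exact hb
          · exact Prod.ext rfl hp2.symm
      rw [htop, hbot, hEd ℓ]
      simp only [hd]
      have := he ℓ
      omega
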